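/- Let D be a directed graph with source s and target t (no edges into s, no edges out of t), |V(D) \ {s,t}| = n, and let w : E(D) → ℝ≥0 be a nonnegative edge-weighting. If P₁, ..., P_{n+1} are directed s–t paths each of total weight at most k, then there exists a rainbow s–t path (its edges injectively assigned to distinct Pᵢ's, each edge in its assigned path) whose total weight is at most k. -/

import Mathlib

/-- The list of (directed) edges of a path given as a list of vertices. -/
def pathEdges {V : Type*} (l : List V) : List (V × V) := l.zip l.tail

/-- `l` is a directed `s`–`t` path in the digraph `D`. -/
def IsSTPath {V : Type*} (D : V → V → Prop) (s t : V) (l : List V) : Prop :=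
  l.Chain' D ∧ l.head? = some s ∧ l.getLast? = some t ∧ l.Nodup

/-- The total weight of a path under an edge weighting. -/
def pathWeight {V : Type*} (w : V × V → ℝ) (l : List V) : ℝ :=
  ((pathEdges l).map w).sum

namespace RainbowAux

variable {V : Type*}

lemma pathEdges_nil : pathEdges ([] : List V) = [] := rfl
lemma pathEdges_single (a : V) : pathEdges [a] = [] := rfl

lemma pathEdges_cons_cons (a b : V) (l : List V) :
    pathEdges (a :: b :: l) = (a, b) :: pathEdges (b :: l) := rfl

lemma pathWeight_nil (w : V × V → ℝ) : pathWeight w ([] : List V) = 0 := rfl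
lemma pathWeight_single (w : V × V → ℝ) (a : V) : pathWeight w [a] = 0 := rfl

lemma pathWeight_cons_cons (w : V × V → ℝ) (a b : V) (l : List V) :
    pathWeight w (a :: b :: l) = w (a, b) + pathWeight w (b :: l) := by
  simp [pathWeight, pathEdges_cons_cons]

lemma pathWeight_nonneg (w : V × V → ℝ) (hw : ∀ e, 0 ≤ w e) (l : List V) :
    0 ≤ pathWeight w l := by
  apply List.sum_nonneg
  intro x hx
  obtain ⟨e, -, rfl⟩ := List.mem_map.mp hx
  exact hw e

lemma mem_of_mem_pathEdges {a b : V} {l : List V} (h : (a, b) ∈ pathEdges l) :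
    a ∈ l ∧ b ∈ l := by
  have := List.of_mem_zip h
  exact ⟨this.1, List.mem_of_mem_tail this.2⟩

lemma mem_tail_exists_edge {y : V} : ∀ {l : List V}, y ∈ l.tail →
    ∃ z, (z, y) ∈ pathEdges l := by
  intro l
  induction l with
  | nil => simp
  | cons a l ih =>
    intro hy
    simp only [List.tail_cons] at hy
    cases l with
    | nil => simp at hy
    | cons b l' =>
      rcases List.mem_cons.mp hy with h | h
      · exact ⟨a, by simp [pathEdges_cons_cons, h]⟩
      · obtain ⟨z, hz⟩ := ih h
        exact ⟨z, by simp [pathEdges_cons_cons]; right; exact hz⟩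

lemma pathEdges_append (A : List V) (v : V) (B : List V) :
    pathEdges (A ++ v :: B) = pathEdges (A ++ [v]) ++ pathEdges (v :: B) := by
  induction A with
  | nil => simp [pathEdges_single]
  | cons a A ih =>
    cases A with
    | nil => simp [pathEdges_cons_cons, pathEdges_single]
    | cons b A' =>
      have : (a :: b :: A') ++ v :: B = a :: ((b :: A') ++ v :: B) := rfl
      rw [this]
      have h2 : (b :: A') ++ v :: B = b :: (A' ++ v :: B) := rfl
      rw [h2, pathEdges_cons_cons]
      rw [h2] at ih
      rw [ih]
      rfl

lemma pathWeight_append (w : V × V → ℝ) (A : List V) (v : V) (B : List V) :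
    pathWeight w (A ++ v :: B) = pathWeight w (A ++ [v]) + pathWeight w (v :: B) := by
  unfold pathWeight
  rw [pathEdges_append, List.map_append, List.sum_append]

lemma chain'_iff_pathEdges (D : V → V → Prop) : ∀ (l : List V),
    l.Chain' D ↔ ∀ e ∈ pathEdges l, D e.1 e.2 := by
  intro l
  induction l with
  | nil => simp [pathEdges_nil, List.Chain', List.isChain_nil]
  | cons a l ih =>
    cases l with
    | nil => simp [pathEdges_single, List.Chain', List.isChain_singleton]
    | cons b l' =>
      change List.IsChain D (b :: l') ↔ _ at ih
      show List.IsChain D (a :: b :: l') ↔ _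
      rw [List.isChain_cons_cons, pathEdges_cons_cons, ih]
      constructor
      · rintro ⟨h1, h2⟩ e he
        rcases List.mem_cons.mp he with rfl | he
        · exact h1
        · exact h2 e he
      · intro h
        exact ⟨h (a, b) (List.mem_cons_self), fun e he => h e (List.mem_cons_of_mem _ he)⟩

/-- suffix of `l` strictly after the first occurrence of `v` -/
def afterV [DecidableEq V] (v : V) : List V → List V
  | [] => []
  | a :: l => if a = v then l else afterV v l

lemma afterV_decomp [DecidableEq V] (v : V) : ∀ {l : List V}, v ∈ l →
    ∃ A, l = A ++ v :: afterV v l ∧ v ∉ A := by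
  intro l
  induction l with
  | nil => simp
  | cons a l ih =>
    intro hv
    by_cases h : a = v
    · subst h
      exact ⟨[], by simp [afterV], by simp⟩
    · have hv' : v ∈ l := by
        rcases List.mem_cons.mp hv with h' | h'
        · exact absurd h'.symm h
        · exact h'
      obtain ⟨A, hA, hvA⟩ := ih hv'
      refine ⟨a :: A, ?_, ?_⟩
      · simp [afterV, h]
        exact hA
      · simp [hvA]
        exact fun h' => h h'.symm

end RainbowAux

namespace RainbowAux

variable {V : Type*}

lemma through_facts [DecidableEq V] {l : List V} {s t v : V} (hnd : l.Nodup)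
    (hh : l.head? = some s) (hl : l.getLast? = some t) (hv : v ∈ l)
    (hvs : v ≠ s) (hvt : v ≠ t) :
    ∃ x B, afterV v l = x :: B ∧
      (s :: x :: B).Nodup ∧
      (x :: B).getLast? = some t ∧
      s ∉ x :: B ∧ v ∉ x :: B ∧
      (v, x) ∈ pathEdges l ∧
      (∀ e ∈ pathEdges (x :: B), e ∈ pathEdges l) ∧
      (∀ z ∈ x :: B, z ∈ l) ∧
      (∀ (w : V × V → ℝ), (∀ e, 0 ≤ w e) → ∀ y L, l = s :: y :: L →
        w (s, y) + pathWeight w (v :: x :: B) ≤ pathWeight w l) := by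
  obtain ⟨A, hA, hvA⟩ := afterV_decomp v hv
  -- A is nonempty with head s
  obtain ⟨a, A₂, rfl⟩ : ∃ a A₂, A = a :: A₂ := by
    cases A with
    | nil =>
      rw [hA] at hh
      simp at hh
      exact absurd hh.symm (Ne.symm hvs)
    | cons a A₂ => exact ⟨a, A₂, rfl⟩
  have has : s = a := by
    rw [hA] at hh
    simp at hh
    exact hh.symm
  subst has
  -- afterV is nonempty
  obtain ⟨x, B, hxB⟩ : ∃ x B, afterV v l = x :: B := by
    cases hAf : afterV v l with
    | nil =>
      rw [hA, hAf] at hl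
      rw [List.getLast?_append_cons] at hl
      simp at hl
      exact absurd hl hvt
    | cons x B => exact ⟨x, B, rfl⟩
  rw [hxB] at hA
  have hndR : (v :: x :: B).Nodup := (hA ▸ hnd).of_append_right
  have hdisj : List.Disjoint (s :: A₂) (v :: x :: B) :=
    List.disjoint_of_nodup_append (hA ▸ hnd)
  have hsnot : s ∉ x :: B := fun h =>
    hdisj (List.mem_cons_self) (List.mem_cons_of_mem _ h)
  have hvnot : v ∉ x :: B := (List.nodup_cons.mp hndR).1
  have hndsxB : (s :: x :: B).Nodup :=
    List.nodup_cons.mpr ⟨hsnot, (List.nodup_cons.mp hndR).2⟩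
  have hlast : (x :: B).getLast? = some t := by
    rw [hA, List.getLast?_append_cons, List.getLast?_cons_cons] at hl
    exact hl
  have hedge : (v, x) ∈ pathEdges l := by
    rw [hA, pathEdges_append]
    exact List.mem_append_right _ (by rw [pathEdges_cons_cons]; exact List.mem_cons_self)
  have hsub : ∀ e ∈ pathEdges (x :: B), e ∈ pathEdges l := by
    intro e he
    rw [hA, pathEdges_append]
    exact List.mem_append_right _ (by rw [pathEdges_cons_cons]; exact List.mem_cons_of_mem _ he)
  have hmem : ∀ z ∈ x :: B, z ∈ l := by
    intro z hz
    rw [hA]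
    exact List.mem_append_right _ (List.mem_cons_of_mem _ hz)
  refine ⟨x, B, hxB, hndsxB, hlast, hsnot, hvnot, hedge, hsub, hmem, ?_⟩
  intro w hw y L hyL
  have key : w (s, y) ≤ pathWeight w ((s :: A₂) ++ [v]) := by
    have hAL : A₂ ++ v :: x :: B = y :: L := by
      rw [hA] at hyL
      simpa using hyL
    cases A₂ with
    | nil =>
      have hvy : y = v := by
        have := congrArg List.head? hAL
        simp at this
        exact this.symm
      subst hvy
      simp [pathWeight_cons_cons, pathWeight_single]
    | cons b A₃ =>
      have hby : y = b := by
        have := congrArg List.head? hAL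
        simp at this
        exact this.symm
      subst hby
      have : (s :: y :: A₃) ++ [v] = s :: y :: (A₃ ++ [v]) := rfl
      rw [this, pathWeight_cons_cons]
      have := pathWeight_nonneg w hw (y :: (A₃ ++ [v]))
      linarith
  calc w (s, y) + pathWeight w (v :: x :: B)
      ≤ pathWeight w ((s :: A₂) ++ [v]) + pathWeight w (v :: x :: B) := by linarith
    _ = pathWeight w l := by rw [hA, pathWeight_append w (s :: A₂) v (x :: B)]

end RainbowAux

namespace RainbowAux

variable {V : Type*}

lemma mem_of_getLast?' {l : List V} {a : V} (h : l.getLast? = some a) : a ∈ l := by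
  obtain ⟨hne, heq⟩ := List.mem_getLast?_eq_getLast (l := l) (x := a) (by rw [h]; rfl)
  rw [heq]
  exact List.getLast_mem hne

lemma first_vertex {l : List V} {s t : V} (hnd : l.Nodup) (hh : l.head? = some s)
    (hl : l.getLast? = some t) (hlen : 2 < l.length) :
    ∃ y L, l = s :: y :: L ∧ y ≠ s ∧ y ≠ t := by
  obtain ⟨a, l₁, rfl⟩ : ∃ a l₁, l = a :: l₁ := by
    cases l with
    | nil => simp at hh
    | cons a l₁ => exact ⟨a, l₁, rfl⟩
  have hsa : s = a := by simp at hh; exact hh.symm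
  subst hsa
  obtain ⟨y, L, rfl⟩ : ∃ y L, l₁ = y :: L := by
    cases l₁ with
    | nil => simp at hlen
    | cons y L => exact ⟨y, L, rfl⟩
  obtain ⟨z, L₂, rfl⟩ : ∃ z L₂, L = z :: L₂ := by
    cases L with
    | nil => simp at hlen
    | cons z L₂ => exact ⟨z, L₂, rfl⟩
  have hsnot : s ∉ y :: z :: L₂ := (List.nodup_cons.mp hnd).1
  have hys : y ≠ s := fun h => hsnot (h ▸ List.mem_cons_self)
  have hndyzL : (y :: z :: L₂).Nodup := (List.nodup_cons.mp hnd).2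
  have hynot : y ∉ z :: L₂ := (List.nodup_cons.mp hndyzL).1
  have htmem : t ∈ z :: L₂ := by
    rw [List.getLast?_cons_cons, List.getLast?_cons_cons] at hl
    exact mem_of_getLast?' hl
  have hyt : y ≠ t := fun h => hynot (h ▸ htmem)
  exact ⟨y, z :: L₂, rfl, hys, hyt⟩

lemma short_case {n : ℕ} (s t : V) (P : Fin (n+1) → List V) (w : Fin (n+1) → V × V → ℝ)
    (k : ℝ) (hk : ∀ ℓ, pathWeight (w ℓ) (P ℓ) ≤ k) (ℓ : Fin (n+1))
    (hnd : (P ℓ).Nodup) (hh : (P ℓ).head? = some s) (hl : (P ℓ).getLast? = some t)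
    (hlen : (P ℓ).length ≤ 2) :
    ∃ Q : List V, Q.Nodup ∧ Q.head? = some s ∧ Q.getLast? = some t ∧
      ∃ c : V × V → Fin (n+1),
        Set.InjOn c {e | e ∈ pathEdges Q} ∧
        (∀ e ∈ pathEdges Q, e ∈ pathEdges (P (c e))) ∧
        ((pathEdges Q).map (fun e => w (c e) e)).sum ≤ k := by
  refine ⟨P ℓ, hnd, hh, hl, fun _ => ℓ, ?_, ?_, ?_⟩
  · obtain ⟨a, l₁, hPl⟩ : ∃ a l₁, P ℓ = a :: l₁ := by
      cases h : P ℓ with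
      | nil => rw [h] at hh; simp at hh
      | cons a l₁ => exact ⟨a, l₁, rfl⟩
    cases l₁ with
    | nil =>
      intro e₁ h₁ e₂ h₂ _
      simp only [Set.mem_setOf_eq, hPl, pathEdges_single] at h₁
      simp at h₁
    | cons b l₂ =>
      obtain rfl : l₂ = [] := by
        rw [hPl] at hlen
        simp only [List.length_cons] at hlen
        exact List.length_eq_zero_iff.mp (by omega)
      intro e₁ h₁ e₂ h₂ _
      simp only [Set.mem_setOf_eq, hPl, pathEdges_cons_cons, pathEdges_single] at h₁ h₂
      simp at h₁ h₂
      rw [h₁, h₂]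
  · intro e he
    exact he
  · exact le_of_eq_of_le (by rfl) (hk ℓ)

end RainbowAux

namespace RainbowAux

theorem core {V : Type*} [Fintype V] [DecidableEq V] (s t : V) :
    ∀ (n : ℕ) (P : Fin (n+1) → List V) (w : Fin (n+1) → V × V → ℝ) (k : ℝ),
      (∀ ℓ e, 0 ≤ w ℓ e) →
      (∀ ℓ, (P ℓ).Nodup) → (∀ ℓ, (P ℓ).head? = some s) →
      (∀ ℓ, (P ℓ).getLast? = some t) →
      (∀ ℓ, pathWeight (w ℓ) (P ℓ) ≤ k) →
      ((⋃ ℓ, {x | x ∈ P ℓ}) \ {s, t}).ncard ≤ n →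
      ∃ Q : List V, Q.Nodup ∧ Q.head? = some s ∧ Q.getLast? = some t ∧
        ∃ c : V × V → Fin (n+1),
          Set.InjOn c {e | e ∈ pathEdges Q} ∧
          (∀ e ∈ pathEdges Q, e ∈ pathEdges (P (c e))) ∧
          ((pathEdges Q).map (fun e => w (c e) e)).sum ≤ k := by
  intro n
  induction n with
  | zero =>
    intro P w k hw hnd hh hl hk hI
    by_cases hex : ∃ ℓ, (P ℓ).length ≤ 2
    · obtain ⟨ℓ, hℓ⟩ := hex
      exact short_case s t P w k hk ℓ (hnd ℓ) (hh ℓ) (hl ℓ) hℓ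
    · exfalso
      push_neg at hex
      obtain ⟨y, L, hPy, hys, hyt⟩ :=
        first_vertex (hnd 0) (hh 0) (hl 0) (hex 0)
      have hyI : y ∈ (⋃ ℓ, {x | x ∈ P ℓ}) \ ({s, t} : Set V) := by
        refine ⟨Set.mem_iUnion.mpr ⟨0, ?_⟩, ?_⟩
        · rw [hPy]; exact List.mem_cons_of_mem _ (List.mem_cons_self)
        · simp [hys, hyt]
      have hfin : ((⋃ ℓ, {x | x ∈ P ℓ}) \ ({s, t} : Set V)).Finite := Set.toFinite _
      have := Set.ncard_eq_zero hfin |>.mp (Nat.le_zero.mp hI)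
      rw [this] at hyI
      exact hyI
  | succ m ih =>
    intro P w k hw hnd hh hl hk hI
    by_cases hex : ∃ ℓ, (P ℓ).length ≤ 2
    · obtain ⟨ℓ, hℓ⟩ := hex
      exact short_case s t P w k hk ℓ (hnd ℓ) (hh ℓ) (hl ℓ) hℓ
    push_neg at hex
    have h3 : ∀ ℓ, ∃ y L, P ℓ = s :: y :: L ∧ y ≠ s ∧ y ≠ t := fun ℓ =>
      first_vertex (hnd ℓ) (hh ℓ) (hl ℓ) (hex ℓ)
    choose vf Lf hPeq hvfs hvft using h3
    obtain ⟨j, -, hjmin⟩ :=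
      Finset.exists_min_image Finset.univ (fun ℓ => w ℓ (s, vf ℓ)) Finset.univ_nonempty
    set v := vf j with hv
    have hvs : v ≠ s := hvfs j
    have hvt : v ≠ t := hvft j
    have hst : s ≠ t := by
      intro hst'
      have hnj := hnd j
      rw [hPeq j] at hnj
      have hsnot : s ∉ vf j :: Lf j := (List.nodup_cons.mp hnj).1
      have htmem : t ∈ vf j :: Lf j := by
        have h' := hl j
        rw [hPeq j, List.getLast?_cons_cons] at h'
        exact mem_of_getLast?' h'
      exact hsnot (hst' ▸ htmem)
    -- subproblem after contracting v into s, dropping color j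
    set emb : Fin (m+1) → Fin (m+2) := j.succAbove with hemb
    set Pp : Fin (m+1) → List V := fun ℓ' =>
      if v ∈ P (emb ℓ') then s :: afterV v (P (emb ℓ')) else P (emb ℓ') with hPpdef
    set wp : Fin (m+1) → V × V → ℝ := fun ℓ' e =>
      if e.1 = s ∧ v ∈ P (emb ℓ') then w j (s, v) + w (emb ℓ') (v, e.2) else w (emb ℓ') e
      with hwpdef
    have hPp : ∀ ℓ', Pp ℓ' =
        if v ∈ P (emb ℓ') then s :: afterV v (P (emb ℓ')) else P (emb ℓ') := fun _ => rfl
    have hwp : ∀ ℓ' e, wp ℓ' e =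
        if e.1 = s ∧ v ∈ P (emb ℓ') then w j (s, v) + w (emb ℓ') (v, e.2) else w (emb ℓ') e :=
      fun _ _ => rfl
    have hTF := fun (ℓ' : Fin (m+1)) (hvm : v ∈ P (emb ℓ')) =>
      through_facts (hnd (emb ℓ')) (hh (emb ℓ')) (hl (emb ℓ')) hvm hvs hvt
    have hwp0 : ∀ ℓ' e, 0 ≤ wp ℓ' e := by
      intro ℓ' e
      rw [hwp]
      split
      · exact add_nonneg (hw j _) (hw _ _)
      · exact hw _ _
    have hndp : ∀ ℓ', (Pp ℓ').Nodup := by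
      intro ℓ'
      by_cases hvm : v ∈ P (emb ℓ')
      · obtain ⟨x, B, hxB, hnd', -⟩ := hTF ℓ' hvm
        rw [hPp, if_pos hvm, hxB]
        exact hnd'
      · rw [hPp, if_neg hvm]; exact hnd _
    have hhp : ∀ ℓ', (Pp ℓ').head? = some s := by
      intro ℓ'
      by_cases hvm : v ∈ P (emb ℓ')
      · rw [hPp, if_pos hvm]; rfl
      · rw [hPp, if_neg hvm]; exact hh _
    have hlp : ∀ ℓ', (Pp ℓ').getLast? = some t := by
      intro ℓ'
      by_cases hvm : v ∈ P (emb ℓ')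
      · obtain ⟨x, B, hxB, -, hlast', -⟩ := hTF ℓ' hvm
        rw [hPp, if_pos hvm, hxB, List.getLast?_cons_cons]
        exact hlast'
      · rw [hPp, if_neg hvm]; exact hl _
    have hkp : ∀ ℓ', pathWeight (wp ℓ') (Pp ℓ') ≤ k := by
      intro ℓ'
      by_cases hvm : v ∈ P (emb ℓ')
      · obtain ⟨x, B, hxB, hnd', hlast', hsnot', hvnot', hedge', hsub', hmem', hwt'⟩ :=
          hTF ℓ' hvm
        rw [hPp, if_pos hvm, hxB, pathWeight_cons_cons]
        have h1 : wp ℓ' (s, x) = w j (s, v) + w (emb ℓ') (v, x) := by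
          rw [hwp]; exact if_pos ⟨rfl, hvm⟩
        have h2 : pathWeight (wp ℓ') (x :: B) = pathWeight (w (emb ℓ')) (x :: B) := by
          unfold pathWeight
          congr 1
          apply List.map_congr_left
          intro e he
          obtain ⟨e1, e2⟩ := e
          rw [hwp, if_neg]
          rintro ⟨h1', -⟩
          exact hsnot' (h1' ▸ (mem_of_mem_pathEdges he).1)
        rw [h1, h2]
        have h4 := hwt' (w (emb ℓ')) (hw (emb ℓ')) (vf (emb ℓ')) (Lf (emb ℓ')) (hPeq (emb ℓ'))
        have h5 := hjmin (emb ℓ') (Finset.mem_univ _)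
        have h6 := hk (emb ℓ')
        rw [pathWeight_cons_cons] at h4
        linarith
      · rw [hPp, if_neg hvm]
        have h2 : pathWeight (wp ℓ') (P (emb ℓ')) = pathWeight (w (emb ℓ')) (P (emb ℓ')) := by
          unfold pathWeight
          congr 1
          apply List.map_congr_left
          intro e he
          rw [hwp, if_neg]
          rintro ⟨-, h2'⟩
          exact hvm h2'
        rw [h2]
        exact hk _
    have hIp : ((⋃ ℓ', {x | x ∈ Pp ℓ'}) \ {s, t} : Set V) ⊆
        ((⋃ ℓ, {x | x ∈ P ℓ}) \ {s, t}) \ {v} := by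
      rintro z ⟨hz1, hz2⟩
      obtain ⟨ℓ', hzℓ⟩ := Set.mem_iUnion.mp hz1
      by_cases hvm : v ∈ P (emb ℓ')
      · obtain ⟨x, B, hxB, -, -, -, hvnot', -, -, hmem', -⟩ := hTF ℓ' hvm
        rw [hPp, if_pos hvm, hxB] at hzℓ
        have hz3 : z ∈ s :: x :: B := hzℓ
        rcases List.mem_cons.mp hz3 with rfl | hz4
        · exact absurd (by simp) hz2
        · refine ⟨⟨Set.mem_iUnion.mpr ⟨emb ℓ', hmem' z hz4⟩, hz2⟩, ?_⟩
          simp only [Set.mem_singleton_iff]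
          exact fun h => hvnot' (h ▸ hz4)
      · rw [hPp, if_neg hvm] at hzℓ
        refine ⟨⟨Set.mem_iUnion.mpr ⟨emb ℓ', hzℓ⟩, hz2⟩, ?_⟩
        simp only [Set.mem_singleton_iff]
        exact fun h => hvm (h ▸ hzℓ)
    have hvI : v ∈ (⋃ ℓ, {x | x ∈ P ℓ}) \ ({s, t} : Set V) := by
      refine ⟨Set.mem_iUnion.mpr ⟨j, ?_⟩, by simp [hvs, hvt]⟩
      rw [hPeq j]
      exact List.mem_cons_of_mem _ (hv ▸ List.mem_cons_self)
    have hIpcard : ((⋃ ℓ', {x | x ∈ Pp ℓ'}) \ {s, t} : Set V).ncard ≤ m := by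
      have h1 := Set.ncard_le_ncard hIp (Set.toFinite _)
      rw [Set.ncard_diff_singleton_of_mem hvI] at h1
      omega
    obtain ⟨Q'', hQnd, hQh, hQl, c'', hcInj, hcMem, hcW⟩ :=
      ih Pp wp k hwp0 hndp hhp hlp hkp hIpcard
    obtain ⟨q, R, hQeq⟩ : ∃ q R, Q'' = s :: q :: R := by
      cases Q'' with
      | nil => simp at hQh
      | cons a T =>
        have has : a = s := by simpa using hQh
        cases T with
        | nil =>
          exfalso
          have hat : a = t := by simpa using hQl
          exact hst (has ▸ hat ▸ rfl)
        | cons q R => exact ⟨q, R, by rw [has]⟩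
    subst hQeq
    have hsqR : s ∉ q :: R := (List.nodup_cons.mp hQnd).1
    have hvPp : ∀ ℓ', v ∉ Pp ℓ' := by
      intro ℓ'
      by_cases hvm : v ∈ P (emb ℓ')
      · obtain ⟨x, B, hxB, -, -, hsnot', hvnot', -⟩ := hTF ℓ' hvm
        rw [hPp, if_pos hvm, hxB]
        intro h'
        rcases List.mem_cons.mp h' with h'' | h''
        · exact hvs h''
        · exact hvnot' h''
      · rw [hPp, if_neg hvm]; exact hvm
    have hvQ : v ∉ s :: q :: R := by
      intro h'
      rcases List.mem_cons.mp h' with h'' | h''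
      · exact hvs h''
      · obtain ⟨z, hz⟩ := mem_tail_exists_edge (l := s :: q :: R) h''
        have h3 := hcMem (z, v) hz
        exact hvPp (c'' (z, v)) ((mem_of_mem_pathEdges h3).2)
    have he₀ : (s, q) ∈ pathEdges (s :: q :: R) := by
      rw [pathEdges_cons_cons]; exact List.mem_cons_self
    have htail : ∀ e ∈ pathEdges (q :: R), e.1 ≠ s ∧ e.1 ≠ v ∧ e ∈ pathEdges (s :: q :: R) := by
      intro e he
      obtain ⟨e1, e2⟩ := e
      have h1 := (mem_of_mem_pathEdges he).1
      refine ⟨fun h' => hsqR (h' ▸ h1), fun h' => hvQ (h' ▸ List.mem_cons_of_mem _ h1), ?_⟩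
      rw [pathEdges_cons_cons]
      exact List.mem_cons_of_mem _ he
    have hfirst : ∀ e ∈ pathEdges (s :: q :: R), e.1 = s → e = (s, q) := by
      intro e he hes
      rw [pathEdges_cons_cons] at he
      rcases List.mem_cons.mp he with h' | h'
      · exact h'
      · exact absurd hes (htail e h').1
    have hgen : ∀ e ∈ pathEdges (s :: q :: R), e.1 ≠ s → e ∈ pathEdges (P (emb (c'' e))) := by
      intro e he hne
      have h1 := hcMem e he
      by_cases hvm : v ∈ P (emb (c'' e))
      · obtain ⟨x, B, hxB, -, -, hsnot', -, -, hsub', -, -⟩ := hTF (c'' e) hvm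
        rw [hPp, if_pos hvm, hxB, pathEdges_cons_cons] at h1
        rcases List.mem_cons.mp h1 with h2 | h2
        · exact absurd (by rw [h2]) hne
        · exact hsub' e h2
      · rw [hPp, if_neg hvm] at h1
        exact h1
    by_cases hvin : v ∈ P (emb (c'' (s, q)))
    · -- lift through v
      obtain ⟨x, B, hxB, hndsxB, hlastxB, hsnotxB, hvnotxB, hedgevx, hsubxB, hmemxB, -⟩ :=
        hTF (c'' (s, q)) hvin
      have hqx : q = x := by
        have h1 := hcMem (s, q) he₀
        rw [hPp, if_pos hvin, hxB, pathEdges_cons_cons] at h1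
        rcases List.mem_cons.mp h1 with h' | h'
        · exact (Prod.mk.injEq _ _ _ _ ▸ h').2
        · exact absurd ((mem_of_mem_pathEdges h').1) hsnotxB
      subst hqx
      set c : V × V → Fin (m+2) := fun e =>
        if e = (s, v) then j else if e = (v, q) then emb (c'' (s, q)) else emb (c'' e)
        with hcdef
      have hcsv : c (s, v) = j := by
        simp [hcdef]
      have hcvq : c (v, q) = emb (c'' (s, q)) := by
        have h1 : ((v, q) : V × V) ≠ (s, v) := fun h' => hvs (congrArg Prod.fst h')
        simp [hcdef, h1]
      have hctail : ∀ e ∈ pathEdges (q :: R), c e = emb (c'' e) := by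
        intro e he
        obtain ⟨hes, hev, -⟩ := htail e he
        simp only [hcdef]
        rw [if_neg (fun h' => hes (by rw [h'])), if_neg (fun h' => hev (by rw [h']))]
      refine ⟨s :: v :: q :: R, ?_, rfl, ?_, c, ?_, ?_, ?_⟩
      · -- nodup
        refine List.nodup_cons.mpr ⟨?_, List.nodup_cons.mpr ⟨?_, (List.nodup_cons.mp hQnd).2⟩⟩
        · intro h'
          rcases List.mem_cons.mp h' with h'' | h''
          · exact hvs h''.symm
          · exact hsqR h''
        · exact fun h' => hvQ (List.mem_cons_of_mem _ h')
      · -- getLast?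
        rw [List.getLast?_cons_cons, List.getLast?_cons_cons]
        rw [List.getLast?_cons_cons] at hQl
        exact hQl
      · -- InjOn
        intro e1 h1 e2 h2 hceq
        simp only [Set.mem_setOf_eq, pathEdges_cons_cons] at h1 h2
        rcases List.mem_cons.mp h1 with rfl | h1'
        · rcases List.mem_cons.mp h2 with rfl | h2'
          · rfl
          · exfalso
            rcases List.mem_cons.mp h2' with rfl | h2''
            · rw [hcsv, hcvq] at hceq
              exact Fin.succAbove_ne j (c'' (s, q)) hceq.symm
            · rw [hcsv, hctail e2 h2''] at hceq
              exact Fin.succAbove_ne j (c'' e2) hceq.symm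
        rcases List.mem_cons.mp h1' with rfl | h1''
        · rcases List.mem_cons.mp h2 with rfl | h2'
          · exfalso
            rw [hcsv, hcvq] at hceq
            exact Fin.succAbove_ne j (c'' (s, q)) hceq
          rcases List.mem_cons.mp h2' with rfl | h2''
          · rfl
          · exfalso
            rw [hcvq, hctail e2 h2''] at hceq
            have h5 : c'' (s, q) = c'' e2 := Fin.succAbove_right_injective hceq
            have h6 : (s, q) = e2 := hcInj he₀ (htail e2 h2'').2.2 h5
            exact (htail e2 h2'').1 (by rw [← h6])
        · rcases List.mem_cons.mp h2 with rfl | h2'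
          · exfalso
            rw [hcsv, hctail e1 h1''] at hceq
            exact Fin.succAbove_ne j (c'' e1) hceq
          rcases List.mem_cons.mp h2' with rfl | h2''
          · exfalso
            rw [hcvq, hctail e1 h1''] at hceq
            have h5 : c'' e1 = c'' (s, q) := Fin.succAbove_right_injective hceq
            have h6 : e1 = (s, q) := hcInj (htail e1 h1'').2.2 he₀ h5
            exact (htail e1 h1'').1 (by rw [h6])
          · rw [hctail e1 h1'', hctail e2 h2''] at hceq
            exact hcInj (htail e1 h1'').2.2 (htail e2 h2'').2.2
              (Fin.succAbove_right_injective hceq)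
      · -- membership
        intro e he
        rw [pathEdges_cons_cons, pathEdges_cons_cons] at he
        rcases List.mem_cons.mp he with rfl | he'
        · rw [hcsv, hPeq j, pathEdges_cons_cons, ← hv]
          exact List.mem_cons_self
        rcases List.mem_cons.mp he' with rfl | he''
        · rw [hcvq]
          exact hedgevx
        · rw [hctail e he'']
          exact hgen e (htail e he'').2.2 (htail e he'').1
      · -- weight
        rw [pathEdges_cons_cons, pathEdges_cons_cons]
        simp only [List.map_cons, List.sum_cons]
        rw [hcsv, hcvq]
        have htl : List.map (fun e => w (c e) e) (pathEdges (q :: R)) =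
            List.map (fun e => wp (c'' e) e) (pathEdges (q :: R)) := by
          apply List.map_congr_left
          intro e he
          rw [hctail e he, hwp, if_neg]
          rintro ⟨hes, -⟩
          exact (htail e he).1 hes
        rw [htl]
        have hW := hcW
        rw [pathEdges_cons_cons] at hW
        simp only [List.map_cons, List.sum_cons] at hW
        have h1 : wp (c'' (s, q)) (s, q) = w j (s, v) + w (emb (c'' (s, q))) (v, q) := by
          rw [hwp]; exact if_pos ⟨rfl, hvin⟩
        rw [h1] at hW
        linarith
    · -- no lift needed
      refine ⟨s :: q :: R, hQnd, hQh, hQl, fun e => emb (c'' e), ?_, ?_, ?_⟩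
      · intro e1 h1 e2 h2 hceq
        exact hcInj h1 h2 (Fin.succAbove_right_injective hceq)
      · intro e he
        by_cases hes : e.1 = s
        · have he' : e = (s, q) := hfirst e he hes
          subst he'
          have h1 := hcMem (s, q) he₀
          rw [hPp, if_neg hvin] at h1
          exact h1
        · exact hgen e he hes
      · have heq : List.map (fun e => w (emb (c'' e)) e) (pathEdges (s :: q :: R)) =
            List.map (fun e => wp (c'' e) e) (pathEdges (s :: q :: R)) := by
          apply List.map_congr_left
          intro e he
          rw [hwp, if_neg]
          rintro ⟨hes, hvm⟩
          have he' : e = (s, q) := hfirst e he hes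
          rw [he'] at hvm
          exact hvin hvm
        rw [heq]
        exact hcW


end RainbowAux


/-- Weighted rainbow path theorem: with `n` inner vertices and a nonnegative
edge weighting, `n+1` directed `s`–`t` paths of weight at most `k` have a
rainbow `s`–`t` path of weight at most `k`. -/
theorem rainbow_path_weighted {V : Type*} [Fintype V] (D : V → V → Prop)
    (s t : V) (hs : ∀ v, ¬ D v s) (ht : ∀ v, ¬ D t v) {n : ℕ}
    (hn : ({v : V | v ≠ s ∧ v ≠ t}).ncard = n)
    (w : V × V → ℝ) (hw : ∀ e, 0 ≤ w e) (k : ℝ)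
    (P : Fin (n + 1) → List V) (hP : ∀ i, IsSTPath D s t (P i))
    (hPw : ∀ i, pathWeight w (P i) ≤ k) :
    ∃ Q : List V, IsSTPath D s t Q ∧ pathWeight w Q ≤ k ∧
      ∃ c : V × V → Fin (n + 1),
        Set.InjOn c {e | e ∈ pathEdges Q} ∧
        ∀ e ∈ pathEdges Q, e ∈ pathEdges (P (c e)) := by
  classical
  have hnd : ∀ i, (P i).Nodup := fun i => (hP i).2.2.2
  have hh : ∀ i, (P i).head? = some s := fun i => (hP i).2.1
  have hl : ∀ i, (P i).getLast? = some t := fun i => (hP i).2.2.1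
  have hch : ∀ i, (P i).Chain' D := fun i => (hP i).1
  have hIcard : ((⋃ ℓ, {x | x ∈ P ℓ}) \ {s, t} : Set V).ncard ≤ n := by
    refine le_trans (Set.ncard_le_ncard ?_ (Set.toFinite _)) (le_of_eq hn)
    rintro z ⟨-, hz2⟩
    simp only [Set.mem_insert_iff, Set.mem_singleton_iff] at hz2
    push_neg at hz2
    exact hz2
  obtain ⟨Q, hQnd, hQh, hQl, c, hcInj, hcMem, hcW⟩ :=
    RainbowAux.core s t n P (fun _ => w) k (fun _ _ => hw _) hnd hh hl (fun i => hPw i) hIcard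
  refine ⟨Q, ⟨?_, hQh, hQl, hQnd⟩, ?_, c, hcInj, hcMem⟩
  · rw [RainbowAux.chain'_iff_pathEdges]
    intro e he
    exact (RainbowAux.chain'_iff_pathEdges D (P (c e))).mp (hch _) e (hcMem e he)
  · exact hcW
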